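/- Uniform interior measure of a Lipschitz epigraph: for every K > 0 there exists η > 0, depending only on K, such that for every K-Lipschitz function ω : ℝ → ℝ, every point x = (x₁,x₂) ∈ ℝ² with x₂ ≥ ω(x₁), and every r > 0, the two-dimensional Lebesgue measure of the set { y ∈ ℝ² : |y − x| < r and y₂ > ω(y₁) } is at least η r². -/

import Mathlib

open MeasureTheory

/-- Uniform interior measure of a Lipschitz epigraph: for every `K > 0` there is
`η > 0`, depending only on `K`, such that for every `K`-Lipschitz `ω : ℝ → ℝ`, every
point `x` on or above the graph of `ω`, and every radius `r > 0`, the part of the open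
disc `D(x,r)` lying strictly above the graph has area at least `η r²`. -/
theorem lipschitz_epigraph_uniform_interior_measure (K : ℝ) (hK : 0 < K) :
    ∃ η : ℝ, 0 < η ∧
      ∀ ω : ℝ → ℝ, (∀ s t : ℝ, |ω s - ω t| ≤ K * |s - t|) →
      ∀ x1 x2 : ℝ, ω x1 ≤ x2 → ∀ r : ℝ, 0 < r →
        ENNReal.ofReal (η * r ^ 2)
          ≤ volume {y : ℝ × ℝ | dist y (x1, x2) < r ∧ ω y.1 < y.2} := by
  have hK1 : (0:ℝ) < K + 1 := by linarith
  refine ⟨1 / (K + 1) ^ 2, by positivity, ?_⟩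
  intro ω hω x1 x2 hx r hr
  set a := r / (K + 1) with ha
  have hapos : 0 < a := div_pos hr hK1
  have har : a < r := by
    rw [ha, div_lt_iff₀ hK1]; nlinarith
  have hsub : Set.Ioo x1 (x1 + a) ×ˢ Set.Ioo (x2 + K * a) (x2 + (K + 1) * a)
      ⊆ {y : ℝ × ℝ | dist y (x1, x2) < r ∧ ω y.1 < y.2} := by
    rintro ⟨y1, y2⟩ ⟨⟨h1, h2⟩, ⟨h3, h4⟩⟩
    have hd1 : dist y1 x1 < r := by
      rw [Real.dist_eq, abs_lt]; constructor <;> nlinarith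
    have hd2 : dist y2 x2 < r := by
      rw [Real.dist_eq, abs_lt]
      have : (K + 1) * a = r := by rw [ha]; field_simp [hK1.ne']
      constructor <;> nlinarith [hK.le]
    constructor
    · rw [Prod.dist_eq]; exact max_lt hd1 hd2
    · have := hω y1 x1
      have habs : |y1 - x1| ≤ a := by
        rw [abs_le]; constructor <;> nlinarith
      have : ω y1 ≤ ω x1 + K * a := by
        have h := abs_le.mp (hω y1 x1)
        have := mul_le_mul_of_nonneg_left habs hK.le
        rw [abs_sub_comm] at this
        nlinarith [abs_le.mp (hω y1 x1), abs_nonneg (y1 - x1),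
          (abs_sub_abs_le_abs_sub (ω y1) (ω x1))]
      simp only
      nlinarith
  calc ENNReal.ofReal (1 / (K + 1) ^ 2 * r ^ 2)
      = volume (Set.Ioo x1 (x1 + a) ×ˢ Set.Ioo (x2 + K * a) (x2 + (K + 1) * a)) := by
        rw [Measure.volume_eq_prod, Measure.prod_prod, Real.volume_Ioo, Real.volume_Ioo,
          ← ENNReal.ofReal_mul (by linarith)]
        congr 1
        rw [ha]; field_simp [hK1.ne']
        ring
    _ ≤ _ := measure_mono hsub
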